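/- Every 1-Lipschitz map f from a finite subset F of a metric space X into the Banach space c₀ (real sequences converging to 0 with sup norm) admits a 1-Lipschitz extension f̄ : X → c₀. -/

import Mathlib

open ZeroAtInfty

lemma c0_dist_apply_le {f g : C₀(ℕ, ℝ)} (n : ℕ) : dist (f n) (g n) ≤ dist f g := by
  rw [← ZeroAtInftyContinuousMap.dist_toBCF_eq_dist (f := f) (g := g)]
  exact BoundedContinuousFunction.dist_coe_le_dist (f := f.toBCF) (g := g.toBCF) n

lemma c0_dist_le {f g : C₀(ℕ, ℝ)} {C : ℝ} (hC : 0 ≤ C) (h : ∀ n, dist (f n) (g n) ≤ C) :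
    dist f g ≤ C := by
  rw [← ZeroAtInftyContinuousMap.dist_toBCF_eq_dist (f := f) (g := g)]
  exact (BoundedContinuousFunction.dist_le hC).mpr h

/-- every 1-Lipschitz map from a finite subset `F` of a metric space `X`
into `c₀` (real sequences tending to `0`, with the sup norm) admits a 1-Lipschitz
extension to all of `X`. -/
theorem lipschitz_extension_to_c0 (X : Type) [MetricSpace X] (F : Set X) (hF : F.Finite)
    (f : ↥F → C₀(ℕ, ℝ)) (hf : LipschitzWith 1 f) :
    ∃ g : X → C₀(ℕ, ℝ), LipschitzWith 1 g ∧ ∀ x : ↥F, g ↑x = f x := by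
  classical
  haveI : Fintype ↥F := hF.fintype
  -- envelope ε n := sum of |f y n|, which dominates each |f y n| and tends to 0
  set ε : ℕ → ℝ := fun n => ∑ y : ↥F, |f y n| with hε
  have hε_nonneg : ∀ n, 0 ≤ ε n := fun n => Finset.sum_nonneg fun y _ => abs_nonneg _
  have hε_ge : ∀ (y : ↥F) (n : ℕ), |f y n| ≤ ε n := fun y n =>
    Finset.single_le_sum (fun y _ => abs_nonneg (f y n)) (Finset.mem_univ y)
  have hε_tendsto : Filter.Tendsto ε Filter.atTop (nhds 0) := by
    have key : ∀ y ∈ (Finset.univ : Finset ↥F),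
        Filter.Tendsto (fun n => |f y n|) Filter.atTop (nhds 0) := by
      intro y _
      have h0 : Filter.Tendsto (⇑(f y)) Filter.atTop (nhds (0 : ℝ)) := by
        have h1 := (f y).zero_at_infty'
        rwa [cocompact_eq_atTop (α := ℕ)] at h1
      simpa using h0.abs
    have := tendsto_finset_sum (Finset.univ : Finset ↥F) key
    simpa using this
  -- McShane extension of each coordinate
  have key : ∀ n : ℕ, ∃ E : X → ℝ, LipschitzWith 1 E ∧ ∀ y : ↥F, E ↑y = f y n := by
    intro n
    set F' : X → ℝ := fun x => if h : x ∈ F then f ⟨x, h⟩ n else 0 with hF'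
    have hlip : LipschitzOnWith 1 F' F := by
      intro x hx x' hx'
      rw [edist_dist, edist_dist]
      have h1 : dist (F' x) (F' x') = dist (f ⟨x, hx⟩ n) (f ⟨x', hx'⟩ n) := by
        simp [hF', hx, hx']
      have h2 : dist (f ⟨x, hx⟩ n) (f ⟨x', hx'⟩ n) ≤ dist (f ⟨x, hx⟩) (f ⟨x', hx'⟩) :=
        c0_dist_apply_le n
      have h3 : dist (f ⟨x, hx⟩) (f ⟨x', hx'⟩) ≤ dist x x' := by
        have := hf.dist_le_mul ⟨x, hx⟩ ⟨x', hx'⟩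
        simpa [Subtype.dist_eq] using this
      simp only [ENNReal.coe_one, one_mul]
      exact ENNReal.ofReal_le_ofReal (h1 ▸ h2.trans h3)
    obtain ⟨E, hE, hEq⟩ := hlip.extend_real
    refine ⟨E, hE, fun y => ?_⟩
    have h := hEq y.2
    simp only [hF', dif_pos y.2, Subtype.coe_eta] at h
    exact h.symm
  choose E hE hEeq using key
  -- the clamped extension
  set G : X → ℕ → ℝ := fun x n => max (min (E n x) (ε n)) (-(ε n)) with hG
  have hGabs : ∀ x n, |G x n| ≤ ε n := by
    intro x n
    rw [abs_le]
    constructor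
    · exact le_max_right _ _
    · exact max_le (min_le_right _ _) (by linarith [hε_nonneg n])
  have hGF : ∀ (y : ↥F) (n : ℕ), G ↑y n = f y n := by
    intro y n
    have h := hε_ge y n
    rw [abs_le] at h
    rw [hG]
    simp only [hEeq n y]
    rw [min_eq_left h.2, max_eq_left (by linarith [h.1])]
  -- each G x is in c₀
  have hGz : ∀ x, Filter.Tendsto (G x) (Filter.cocompact ℕ) (nhds 0) := by
    intro x
    rw [cocompact_eq_atTop (α := ℕ)]
    apply squeeze_zero_norm (fun n => hGabs x n) hε_tendsto
  refine ⟨fun x => ⟨⟨G x, continuous_of_discreteTopology⟩, hGz x⟩, ?_, ?_⟩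
  · apply LipschitzWith.of_dist_le_mul
    intro x x'
    rw [NNReal.coe_one, one_mul]
    apply c0_dist_le dist_nonneg
    intro n
    have step1 : dist (G x n) (G x' n) ≤ dist (E n x) (E n x') := by
      simp only [hG, Real.dist_eq]
      calc |max (min (E n x) (ε n)) (-(ε n)) - max (min (E n x') (ε n)) (-(ε n))|
          ≤ |min (E n x) (ε n) - min (E n x') (ε n)| := abs_max_sub_max_le_abs _ _ _
        _ ≤ max |E n x - E n x'| |ε n - ε n| := abs_min_sub_min_le_max _ _ _ _
        _ = |E n x - E n x'| := by simp [abs_nonneg]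
    have step2 : dist (E n x) (E n x') ≤ dist x x' := by
      have := (hE n).dist_le_mul x x'
      simpa using this
    exact step1.trans step2
  · intro y
    apply ZeroAtInftyContinuousMap.ext
    intro n
    exact hGF y n
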